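/- There exist a finite set S, weights p, clusters q(c), and a collection of subsets S̃ such that the inclusion Γ_SMDP ⊆ Γ_MI is strict. Concretely: take S = {s₁,...,s₇}, C = {c₁,...,c₅} with p(cᵢ) = 1/5, clusters q(c₁) = {s₁,s₂}, q(c₂) = {s₂,s₃,s₄}, q(c₃) = {s₃,s₄,s₅}, q(c₄) = {s₅,s₆}, q(c₅) = {s₆,s₇}, and S̃ containing all singletons and all five clusters. Then the distribution γ with γ(s₁) = γ(s₃) = γ(s₆) = 1/5, γ(s₄) = 2/5, and γ = 0 elsewhere satisfies all MI-MDP interval constraints but is not of SMDP form. -/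

import Mathlib

open scoped Classical

private lemma gam5 : (![1/5, 0, 1/5, 2/5, 0, 1/5, 0] : Fin 7 → ℝ) 5 = 1/5 := rfl
private lemma gam6 : (![1/5, 0, 1/5, 2/5, 0, 1/5, 0] : Fin 7 → ℝ) 6 = 0 := rfl
private lemma gam2 : (![1/5, 0, 1/5, 2/5, 0, 1/5, 0] : Fin 7 → ℝ) 2 = 1/5 := rfl
private lemma gam3 : (![1/5, 0, 1/5, 2/5, 0, 1/5, 0] : Fin 7 → ℝ) 3 = 2/5 := rfl
private lemma gam4 : (![1/5, 0, 1/5, 2/5, 0, 1/5, 0] : Fin 7 → ℝ) 4 = 0 := rfl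

theorem smdp_strictly_tighter_than_mimdp_example :
    ∀ p : Fin 5 → ℝ, (∀ c, p c = 1/5) →
    ∀ q : Fin 5 → Finset (Fin 7),
      q = ![{0,1}, {1,2,3}, {2,3,4}, {4,5}, {5,6}] →
    ∀ γ : Fin 7 → ℝ, γ = ![1/5, 0, 1/5, 2/5, 0, 1/5, 0] →
    ∀ St : Finset (Finset (Fin 7)),
      St = (Finset.univ.image fun s : Fin 7 => ({s} : Finset (Fin 7))) ∪
        Finset.univ.image q →
    ((∀ s, 0 ≤ γ s) ∧ (∑ s, γ s = 1) ∧
      ∀ t ∈ St,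
        (∑ c ∈ Finset.univ.filter (fun c => q c ⊆ t), p c) ≤ ∑ s ∈ t, γ s ∧
        ∑ s ∈ t, γ s ≤ ∑ c ∈ Finset.univ.filter (fun c => (q c ∩ t).Nonempty), p c) ∧
    ¬ ∃ θ : Fin 5 → Fin 7 → ℝ,
        (∀ c s, 0 ≤ θ c s) ∧ (∀ c, ∑ s, θ c s = 1) ∧
        (∀ c s, θ c s ≠ 0 → s ∈ q c) ∧
        ∀ s, γ s = ∑ c, θ c s * p c := by
  intro p hp q hq γ hγ St hSt
  subst hq hγ hSt
  refine ⟨⟨?_, ?_, ?_⟩, ?_⟩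
  · intro s; fin_cases s <;> norm_num
  · simp only [Fin.sum_univ_seven]; norm_num [gam2, gam3, gam4, gam5, gam6]
  · intro t ht
    fin_cases ht <;>
      constructor <;>
      · simp only [Finset.sum_filter, Fin.sum_univ_five]
        norm_num (config := { decide := true }) [hp, gam2, gam3, gam4, gam5, gam6]
  · rintro ⟨θ, hnn, hsum, hsupp, hg⟩
    have hz : ∀ c s, s ∉ (![{0,1}, {1,2,3}, {2,3,4}, {4,5}, {5,6}] : Fin 5 → Finset (Fin 7)) c → θ c s = 0 := by
      intro c s h
      by_contra hne
      exact h (hsupp c s hne)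
    have e0 := hg 0
    have e1 := hg 1
    have e2 := hg 2
    have e3 := hg 3
    have e4 := hg 4
    simp [Fin.sum_univ_five, hp] at e0 e1 e2 e3 e4
    have s0 := hsum 0
    have s1 := hsum 1
    have s2 := hsum 2
    simp [Fin.sum_univ_seven] at s0 s1 s2
    have z02 : θ 0 2 = 0 := hz 0 2 (by decide)
    have z03 : θ 0 3 = 0 := hz 0 3 (by decide)
    have z04 : θ 0 4 = 0 := hz 0 4 (by decide)
    have z05 : θ 0 5 = 0 := hz 0 5 (by decide)
    have z06 : θ 0 6 = 0 := hz 0 6 (by decide)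
    have z10 : θ 1 0 = 0 := hz 1 0 (by decide)
    have z14 : θ 1 4 = 0 := hz 1 4 (by decide)
    have z15 : θ 1 5 = 0 := hz 1 5 (by decide)
    have z16 : θ 1 6 = 0 := hz 1 6 (by decide)
    have z20 : θ 2 0 = 0 := hz 2 0 (by decide)
    have z21 : θ 2 1 = 0 := hz 2 1 (by decide)
    have z25 : θ 2 5 = 0 := hz 2 5 (by decide)
    have z26 : θ 2 6 = 0 := hz 2 6 (by decide)
    have z30 : θ 3 0 = 0 := hz 3 0 (by decide)
    have z31 : θ 3 1 = 0 := hz 3 1 (by decide)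
    have z32 : θ 3 2 = 0 := hz 3 2 (by decide)
    have z33 : θ 3 3 = 0 := hz 3 3 (by decide)
    have z40 : θ 4 0 = 0 := hz 4 0 (by decide)
    have z41 : θ 4 1 = 0 := hz 4 1 (by decide)
    have z42 : θ 4 2 = 0 := hz 4 2 (by decide)
    have z43 : θ 4 3 = 0 := hz 4 3 (by decide)
    have z44 : θ 4 4 = 0 := hz 4 4 (by decide)
    have n11 := hnn 1 1
    have n24 := hnn 2 4
    have n34 := hnn 3 4
    have n01 := hnn 0 1
    linarith
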